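/- Under the quadratic-in-type assumption and the normalization U(λ;θ) - U(1-λ;θ) = θ, the riskless demand reduction profile is a Bayes-Nash equilibrium (i.e., g(θ) ≥ 0 for all θ ∈ [θ̲,θ̄], where g is the collusion incentive function) if the condition E[θ_j] ≥ U(λ;θ̄) - U(1/2;θ̄) holds, given additionally that g(θ̲) ≥ 0. Conversely, if E[θ_j] < U(λ;θ̄) - U(1/2;θ̄) then g(θ̄) < 0 and collusion fails for the highest type. -/

import Mathlib

open intervalIntegral

/-- Under the quadratic-in-type assumption and normalization
U(λ;θ)-U(1-λ;θ) = θ, collusion (g ≥ 0 on [θ̲,θ̄]) holds if E[θ] ≥ U(λ;θ̄) - U(1/2;θ̄)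
(given g(θ̲) ≥ 0); conversely if E[θ] < U(λ;θ̄) - U(1/2;θ̄) then g(θ̄) < 0. -/
theorem collusion_condition
    (lam tlo thi : ℝ) (hlam : 1/2 < lam ∧ lam < 1) (htype : tlo < thi)
    (U U' : ℝ → ℝ → ℝ)
    (F f : ℝ → ℝ)
    (hf : Continuous f) (hfpos : ∀ θ, 0 ≤ f θ)
    (hF : ∀ θ, HasDerivAt F (f θ) θ)
    (hFthi : F thi = 1)
    (hUd : ∀ x θ, HasDerivAt (fun t => U x t) (U' x θ) θ)
    (hUdd : ∀ x θ, HasDerivAt (fun t => U' x t) 0 θ)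
    (hnorm : ∀ θ, U lam θ - U (1 - lam) θ = θ) :
    ((0 ≤ U (1/2) tlo - F tlo * tlo - U (1 - lam) tlo + ∫ t in tlo..tlo, t * f t) →
     ((U lam thi - U (1/2) thi) ≤ ∫ t in tlo..thi, t * f t) →
     ∀ θ ∈ Set.Icc tlo thi,
       0 ≤ U (1/2) θ - F θ * θ - U (1 - lam) θ + ∫ t in tlo..θ, t * f t) ∧
    ((∫ t in tlo..thi, t * f t) < U lam thi - U (1/2) thi →
       U (1/2) thi - F thi * thi - U (1 - lam) thi + (∫ t in tlo..thi, t * f t) < 0) := by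
  -- U' x is constant in θ
  have hU'const : ∀ x θ, U' x θ = U' x tlo := by
    intro x θ
    have hdiff : Differentiable ℝ (fun t => U' x t) := fun t => (hUdd x t).differentiableAt
    have hz : ∀ t, deriv (fun t => U' x t) t = 0 := fun t => (hUdd x t).deriv
    exact is_const_of_deriv_eq_zero hdiff hz θ tlo
  set c : ℝ := U' (1/2) tlo - U' (1 - lam) tlo with hc
  set g : ℝ → ℝ := fun θ => U (1/2) θ - F θ * θ - U (1 - lam) θ + ∫ t in tlo..θ, t * f t
    with hg
  have hgd : ∀ θ, HasDerivAt g (c - F θ) θ := by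
    intro θ
    have hcont : Continuous fun t => t * f t := continuous_id.mul hf
    have hint : HasDerivAt (fun u => ∫ t in tlo..u, t * f t) (θ * f θ) θ :=
      intervalIntegral.integral_hasDerivAt_right (hcont.intervalIntegrable _ _)
        (hcont.stronglyMeasurable.stronglyMeasurableAtFilter) hcont.continuousAt
    have h1 : HasDerivAt (fun t => F t * t) (f θ * θ + F θ * 1) θ :=
      (hF θ).mul (hasDerivAt_id θ)
    have := (((hUd (1/2) θ).sub h1).sub (hUd (1 - lam) θ)).add hint
    refine this.congr_deriv ?_
    rw [hc, ← hU'const (1/2) θ, ← hU'const (1 - lam) θ]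
    ring
  have hgdiff : Differentiable ℝ g := fun θ => (hgd θ).differentiableAt
  have hderiv : ∀ θ, deriv g θ = c - F θ := fun θ => (hgd θ).deriv
  -- F is monotone
  have hFmono : Monotone F :=
    monotone_of_deriv_nonneg (fun θ => (hF θ).differentiableAt)
      (fun θ => by rw [(hF θ).deriv]; exact hfpos θ)
  have hanti : Antitone (deriv g) := by
    intro a b hab
    rw [hderiv, hderiv]
    linarith [hFmono hab]
  have hconc : ConcaveOn ℝ Set.univ g := hanti.concaveOn_univ_of_deriv hgdiff
  constructor
  · intro h0 h1 θ hθ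
    have hglo : 0 ≤ g tlo := h0
    have hghi : 0 ≤ g thi := by
      have hn := hnorm thi
      simp only [hg, hFthi]
      linarith
    -- express θ as convex combination
    obtain ⟨hθ1, hθ2⟩ := hθ
    have hd : (0:ℝ) < thi - tlo := by linarith
    have ha : 0 ≤ (thi - θ) / (thi - tlo) := div_nonneg (by linarith) hd.le
    have hb : 0 ≤ (θ - tlo) / (thi - tlo) := div_nonneg (by linarith) hd.le
    have hab : (thi - θ) / (thi - tlo) + (θ - tlo) / (thi - tlo) = 1 := by
      field_simp
      ring
    have hcomb : ((thi - θ) / (thi - tlo)) • tlo + ((θ - tlo) / (thi - tlo)) • thi = θ := by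
      show ((thi - θ) / (thi - tlo)) * tlo + ((θ - tlo) / (thi - tlo)) * thi = θ
      field_simp
      ring
    have hcc := hconc.2 (Set.mem_univ tlo) (Set.mem_univ thi) ha hb hab
    rw [hcomb] at hcc
    refine le_trans ?_ hcc
    have := mul_nonneg ha hglo
    have := mul_nonneg hb hghi
    simpa using by positivity
  · intro h
    have hn := hnorm thi
    rw [hFthi]
    linarith
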